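/- arXiv:2511.05607 — 2 statements merged into one kernel-verified Lean document; each statement's English description precedes it below -/
import Mathlib

section
/- For every n ≥ 3, the corona C_n ⊙ 3K_1 admits a signed product cordial labeling. -/
/-- Number of vertices with label `s` under labeling `α`. -/
def vCount {V : Type} [Fintype V] [DecidableEq V] (α : V → ℤ) (s : ℤ) : ℕ :=
  (Finset.univ.filter (fun v => α v = s)).card

/-- The induced edge label on an unordered pair. -/
def edgeLabel {V : Type} (α : V → ℤ) : Sym2 V → ℤ :=
  Sym2.lift ⟨fun u v => α u * α v, fun u v => mul_comm _ _⟩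

/-- Number of edges of `G` with induced label `s` under vertex labeling `α`. -/
def eCount {V : Type} [Fintype V] [DecidableEq V] (G : SimpleGraph V)
    [DecidableRel G.Adj] (α : V → ℤ) (s : ℤ) : ℕ :=
  (G.edgeFinset.filter (fun e => edgeLabel α e = s)).card

/-- `G` admits a signed product cordial labeling. -/
def IsSignedProductCordial {V : Type} [Fintype V] [DecidableEq V]
    (G : SimpleGraph V) [DecidableRel G.Adj] : Prop :=
  ∃ α : V → ℤ, (∀ v, α v = 1 ∨ α v = -1) ∧
    ((vCount α 1 : ℤ) - (vCount α (-1) : ℤ)).natAbs ≤ 1 ∧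
    ((eCount G α 1 : ℤ) - (eCount G α (-1) : ℤ)).natAbs ≤ 1

/-- The splitting graph of `G`: for each vertex `v` (the `inl` copy) a new vertex `v'`
(the `inr` copy) adjacent to exactly the neighbors of `v` in `G`. -/
def splt {V : Type} (G : SimpleGraph V) : SimpleGraph (V ⊕ V) where
  Adj x y := match x, y with
    | .inl u, .inl v => G.Adj u v
    | .inl u, .inr v => G.Adj u v
    | .inr u, .inl v => G.Adj u v
    | .inr _, .inr _ => False
  symm := by constructor; rintro (u|u) (v|v) h <;> first | exact G.adj_symm h | exact h.elim
  loopless := by constructor; rintro (u|u) h; exact G.irrefl h; exact h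

instance {V : Type} (G : SimpleGraph V) [DecidableRel G.Adj] :
    DecidableRel (splt G).Adj := fun x y =>
  match x, y with
  | .inl u, .inl v => inferInstanceAs (Decidable (G.Adj u v))
  | .inl u, .inr v => inferInstanceAs (Decidable (G.Adj u v))
  | .inr u, .inl v => inferInstanceAs (Decidable (G.Adj u v))
  | .inr _, .inr _ => inferInstanceAs (Decidable False)

/-- The corona `Cₙ ⊙ 3K₁`: vertex `(x, 0)` is the cycle vertex `uₓ`, and `(x, 1)`,
`(x, 2)`, `(x, 3)` are the three pendant vertices `vₓ`, `wₓ`, `tₓ` attached to `uₓ`. -/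
def corona (n : ℕ) : SimpleGraph (Fin n × Fin 4) where
  Adj p q :=
    (p.2 = 0 ∧ q.2 = 0 ∧ p.1 ≠ q.1 ∧
      (q.1.val = (p.1.val + 1) % n ∨ p.1.val = (q.1.val + 1) % n)) ∨
    (p.1 = q.1 ∧ ((p.2 = 0 ∧ q.2 ≠ 0) ∨ (q.2 = 0 ∧ p.2 ≠ 0)))
  symm := by
    constructor
    rintro p q (⟨h1, h2, h3, h4⟩ | ⟨h1, h2⟩)
    · exact Or.inl ⟨h2, h1, h3.symm, h4.symm⟩
    · exact Or.inr ⟨h1.symm, h2.symm⟩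
  loopless := by
    constructor
    rintro p (⟨_, _, h, _⟩ | ⟨_, ⟨_, h⟩ | ⟨_, h⟩⟩) <;> simp_all

instance (n : ℕ) : DecidableRel (corona n).Adj := fun p q =>
  inferInstanceAs (Decidable
    ((p.2 = 0 ∧ q.2 = 0 ∧ p.1 ≠ q.1 ∧
      (q.1.val = (p.1.val + 1) % n ∨ p.1.val = (q.1.val + 1) % n)) ∨
    (p.1 = q.1 ∧ ((p.2 = 0 ∧ q.2 ≠ 0) ∨ (q.2 = 0 ∧ p.2 ≠ 0)))))

/-- Auxiliary: labeling used for the corona. -/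
def coronaLabel (n : ℕ) : Fin n × Fin 4 → ℤ :=
  fun p => if p.2 = 0 ∨ p.2 = 1 then 1 else -1

/-- The cycle edge starting at `x`. -/
def cycEdge (n : ℕ) (hn : 3 ≤ n) (x : Fin n) : Sym2 (Fin n × Fin 4) :=
  s((x, (0 : Fin 4)), (⟨(x.val + 1) % n, Nat.mod_lt _ (by omega)⟩, (0 : Fin 4)))

/-- The pendant edge at `x` to pendant `j`. -/
def penEdge (n : ℕ) (j : Fin 4) (x : Fin n) : Sym2 (Fin n × Fin 4) :=
  s((x, (0 : Fin 4)), (x, j))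

theorem corona_edgeFinset (n : ℕ) (hn : 3 ≤ n) :
    (corona n).edgeFinset =
      (Finset.univ.image (cycEdge n hn)) ∪
      (Finset.univ.image (penEdge n 1)) ∪
      (Finset.univ.image (penEdge n 2)) ∪
      (Finset.univ.image (penEdge n 3)) := by
  ext e
  induction e using Sym2.ind with
  | _ a b =>
    simp only [SimpleGraph.mem_edgeFinset, SimpleGraph.mem_edgeSet]
    simp only [SimpleGraph.mem_edgeFinset, SimpleGraph.mem_edgeSet, corona,
      Finset.mem_union, Finset.mem_image, Finset.mem_univ, true_and, Sym2.eq_iff,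
      cycEdge, penEdge]
    constructor
    · rintro (⟨h1, h2, h3, h4⟩ | ⟨h1, ⟨h2, h3⟩ | ⟨h2, h3⟩⟩)
      · obtain ⟨x, j⟩ := a; obtain ⟨y, k⟩ := b
        simp only at h1 h2 h3 h4 ⊢
        subst h1; subst h2
        rcases h4 with h | h
        · refine Or.inl (Or.inl (Or.inl ⟨x, Or.inl ⟨rfl, ?_⟩⟩))
          exact Prod.ext (Fin.ext h.symm) rfl
        · refine Or.inl (Or.inl (Or.inl ⟨y, Or.inr ⟨rfl, ?_⟩⟩))
          exact Prod.ext (Fin.ext h.symm) rfl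
      · obtain ⟨x, j⟩ := a; obtain ⟨y, k⟩ := b
        simp only at h1 h2 h3 ⊢
        subst h1; subst h2
        fin_cases k
        · simp at h3
        · exact Or.inl (Or.inl (Or.inr ⟨x, Or.inl ⟨rfl, rfl⟩⟩))
        · exact Or.inl (Or.inr ⟨x, Or.inl ⟨rfl, rfl⟩⟩)
        · exact Or.inr ⟨x, Or.inl ⟨rfl, rfl⟩⟩
      · obtain ⟨x, j⟩ := a; obtain ⟨y, k⟩ := b
        simp only at h1 h2 h3 ⊢
        subst h1; subst h2
        fin_cases j
        · simp at h3
        · exact Or.inl (Or.inl (Or.inr ⟨x, Or.inr ⟨rfl, rfl⟩⟩))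
        · exact Or.inl (Or.inr ⟨x, Or.inr ⟨rfl, rfl⟩⟩)
        · exact Or.inr ⟨x, Or.inr ⟨rfl, rfl⟩⟩
    · rintro (((⟨x, (⟨rfl, rfl⟩ | ⟨rfl, rfl⟩)⟩ | ⟨x, (⟨rfl, rfl⟩ | ⟨rfl, rfl⟩)⟩) |
        ⟨x, (⟨rfl, rfl⟩ | ⟨rfl, rfl⟩)⟩) | ⟨x, (⟨rfl, rfl⟩ | ⟨rfl, rfl⟩)⟩)
      · refine Or.inl ⟨rfl, rfl, ?_, Or.inl rfl⟩
        intro h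
        have h2 : x.val = (x.val + 1) % n := congrArg Fin.val h
        have hx := x.isLt
        rcases Nat.lt_or_ge (x.val + 1) n with h3 | h3
        · rw [Nat.mod_eq_of_lt h3] at h2; omega
        · have h4 : x.val + 1 = n := by omega
          rw [h4, Nat.mod_self] at h2; omega
      · refine Or.inl ⟨rfl, rfl, ?_, Or.inr rfl⟩
        intro h
        have h2 : x.val = (x.val + 1) % n := (congrArg Fin.val h).symm
        have hx := x.isLt
        rcases Nat.lt_or_ge (x.val + 1) n with h3 | h3
        · rw [Nat.mod_eq_of_lt h3] at h2; omega
        · have h4 : x.val + 1 = n := by omega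
          rw [h4, Nat.mod_self] at h2; omega
      all_goals first
        | exact Or.inr ⟨rfl, Or.inl ⟨rfl, by simp⟩⟩
        | exact Or.inr ⟨rfl, Or.inr ⟨rfl, by simp⟩⟩

theorem cycEdge_inj (n : ℕ) (hn : 3 ≤ n) : Function.Injective (cycEdge n hn) := by
  intro x y h
  rw [cycEdge, cycEdge, Sym2.eq_iff] at h
  rcases h with ⟨h1, -⟩ | ⟨h1, h2⟩
  · exact congrArg Prod.fst h1
  · exfalso
    have e1 : x.val = (y.val + 1) % n := congrArg Fin.val (congrArg Prod.fst h1)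
    have e2 : y.val = (x.val + 1) % n := (congrArg Fin.val (congrArg Prod.fst h2)).symm
    have hx := x.isLt; have hy := y.isLt
    rcases Nat.lt_or_ge (y.val + 1) n with h3 | h3
    · rw [Nat.mod_eq_of_lt h3] at e1
      rcases Nat.lt_or_ge (x.val + 1) n with h4 | h4
      · rw [Nat.mod_eq_of_lt h4] at e2; omega
      · have : x.val + 1 = n := by omega
        rw [this, Nat.mod_self] at e2; omega
    · have : y.val + 1 = n := by omega
      rw [this, Nat.mod_self] at e1
      rcases Nat.lt_or_ge (x.val + 1) n with h4 | h4
      · rw [Nat.mod_eq_of_lt h4] at e2; omega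
      · have h5 : x.val + 1 = n := by omega
        rw [h5, Nat.mod_self] at e2; omega

theorem penEdge_inj (n : ℕ) (j : Fin 4) : Function.Injective (penEdge n j) := by
  intro x y h
  rw [penEdge, penEdge, Sym2.eq_iff] at h
  rcases h with ⟨h1, -⟩ | ⟨h1, -⟩ <;> exact congrArg Prod.fst h1

/-- For every `n ≥ 3`, the corona `Cₙ ⊙ 3K₁` admits a signed product
cordial labeling. -/
theorem corona_signedProductCordial (n : ℕ) (hn : 3 ≤ n) :
    IsSignedProductCordial (corona n) := by
  classical
  refine ⟨coronaLabel n, ?_, ?_, ?_⟩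
  · intro p
    by_cases h : p.2 = 0 ∨ p.2 = 1 <;> simp [coronaLabel, h]
  · -- vertex balance
    have h1 : vCount (coronaLabel n) 1 = 2 * n := by
      have hp : (Finset.univ.filter fun p : Fin n × Fin 4 => coronaLabel n p = 1)
          = Finset.univ.filter fun p : Fin n × Fin 4 => p.2 = 0 ∨ p.2 = 1 := by
        apply Finset.filter_congr
        intro p _
        by_cases h : p.2 = 0 ∨ p.2 = 1 <;> simp [coronaLabel, h]
      have h2 : (Finset.univ.filter fun p : Fin n × Fin 4 => p.2 = 0 ∨ p.2 = 1)
          = Finset.univ ×ˢ (Finset.univ.filter fun j : Fin 4 => j = 0 ∨ j = 1) := by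
        rw [← Finset.filter_product_right (fun j : Fin 4 => j = 0 ∨ j = 1),
          Finset.univ_product_univ]
      rw [vCount, hp, h2, Finset.card_product]
      have : (Finset.univ.filter fun j : Fin 4 => j = 0 ∨ j = 1) = {0, 1} := by decide
      rw [this]; simp [mul_comm]
    have h2 : vCount (coronaLabel n) (-1) = 2 * n := by
      have hp : (Finset.univ.filter fun p : Fin n × Fin 4 => coronaLabel n p = -1)
          = Finset.univ.filter fun p : Fin n × Fin 4 => ¬(p.2 = 0 ∨ p.2 = 1) := by
        apply Finset.filter_congr
        intro p _
        by_cases h : p.2 = 0 ∨ p.2 = 1 <;> simp [coronaLabel, h]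
      have h2 : (Finset.univ.filter fun p : Fin n × Fin 4 => ¬(p.2 = 0 ∨ p.2 = 1))
          = Finset.univ ×ˢ (Finset.univ.filter fun j : Fin 4 => ¬(j = 0 ∨ j = 1)) := by
        rw [← Finset.filter_product_right (fun j : Fin 4 => ¬(j = 0 ∨ j = 1)),
          Finset.univ_product_univ]
      rw [vCount, hp, h2, Finset.card_product]
      have : (Finset.univ.filter fun j : Fin 4 => ¬(j = 0 ∨ j = 1)) = {2, 3} := by decide
      rw [this]; simp [mul_comm]
    rw [h1, h2]; simp
  · -- edge balance
    have hlab : ∀ (a b : Fin n × Fin 4),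
        edgeLabel (coronaLabel n) s(a, b) = coronaLabel n a * coronaLabel n b := fun a b => rfl
    have hcyc1 : ∀ x : Fin n, edgeLabel (coronaLabel n) (cycEdge n hn x) = 1 := by
      intro x; rw [cycEdge, hlab]; simp [coronaLabel]
    have hpen : ∀ (j : Fin 4) (x : Fin n),
        edgeLabel (coronaLabel n) (penEdge n j x) = coronaLabel n (x, j) := by
      intro j x; rw [penEdge, hlab]; simp [coronaLabel]
    have hp1 : ∀ x : Fin n, edgeLabel (coronaLabel n) (penEdge n 1 x) = 1 := by
      intro x; rw [hpen]; simp [coronaLabel]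
    have hp2 : ∀ x : Fin n, edgeLabel (coronaLabel n) (penEdge n 2 x) = -1 := by
      intro x; rw [hpen]; simp [coronaLabel]
    have hp3 : ∀ x : Fin n, edgeLabel (coronaLabel n) (penEdge n 3 x) = -1 := by
      intro x; rw [hpen]; simp [coronaLabel]
    -- disjointness
    have hd_cyc_pen : ∀ j : Fin 4, j ≠ 0 →
        Disjoint (Finset.univ.image (cycEdge n hn)) (Finset.univ.image (penEdge n j)) := by
      intro j hj
      rw [Finset.disjoint_left]
      rintro e he hpe
      simp only [Finset.mem_image, Finset.mem_univ, true_and] at he hpe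
      obtain ⟨x, rfl⟩ := he
      obtain ⟨y, hy⟩ := hpe
      rw [penEdge, cycEdge, Sym2.eq_iff] at hy
      rcases hy with ⟨h1, h2⟩ | ⟨h1, h2⟩ <;> exact hj (congrArg Prod.snd h2)
    have hd_pen : ∀ j k : Fin 4, j ≠ k → j ≠ 0 → k ≠ 0 →
        Disjoint (Finset.univ.image (penEdge n j)) (Finset.univ.image (penEdge n k)) := by
      intro j k hjk hj hk
      rw [Finset.disjoint_left]
      rintro e he hpe
      simp only [Finset.mem_image, Finset.mem_univ, true_and] at he hpe
      obtain ⟨x, rfl⟩ := he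
      obtain ⟨y, hy⟩ := hpe
      rw [penEdge, penEdge, Sym2.eq_iff] at hy
      rcases hy with ⟨h1, h2⟩ | ⟨h1, h2⟩
      · exact hjk (congrArg Prod.snd h2).symm
      · exact hj (congrArg Prod.snd h1).symm
    have hE := corona_edgeFinset n hn
    have he1 : eCount (corona n) (coronaLabel n) 1 = 2 * n := by
      rw [eCount, hE]
      rw [Finset.filter_union, Finset.filter_union, Finset.filter_union]
      rw [Finset.filter_true_of_mem (by
        rintro e he
        simp only [Finset.mem_image, Finset.mem_univ, true_and] at he
        obtain ⟨x, rfl⟩ := he; exact hcyc1 x)]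
      rw [Finset.filter_true_of_mem (by
        rintro e he
        simp only [Finset.mem_image, Finset.mem_univ, true_and] at he
        obtain ⟨x, rfl⟩ := he; exact hp1 x)]
      rw [Finset.filter_false_of_mem (by
        rintro e he
        simp only [Finset.mem_image, Finset.mem_univ, true_and] at he
        obtain ⟨x, rfl⟩ := he; rw [hp2 x]; decide)]
      rw [Finset.filter_false_of_mem (by
        rintro e he
        simp only [Finset.mem_image, Finset.mem_univ, true_and] at he
        obtain ⟨x, rfl⟩ := he; rw [hp3 x]; decide)]
      rw [Finset.union_empty, Finset.union_empty,
        Finset.card_union_of_disjoint (hd_cyc_pen 1 (by decide)),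
        Finset.card_image_of_injective _ (cycEdge_inj n hn),
        Finset.card_image_of_injective _ (penEdge_inj n 1)]
      simp [two_mul]
    have he2 : eCount (corona n) (coronaLabel n) (-1) = 2 * n := by
      rw [eCount, hE]
      rw [Finset.filter_union, Finset.filter_union, Finset.filter_union]
      rw [Finset.filter_false_of_mem (by
        rintro e he
        simp only [Finset.mem_image, Finset.mem_univ, true_and] at he
        obtain ⟨x, rfl⟩ := he; rw [hcyc1 x]; decide)]
      rw [Finset.filter_false_of_mem (by
        rintro e he
        simp only [Finset.mem_image, Finset.mem_univ, true_and] at he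
        obtain ⟨x, rfl⟩ := he; rw [hp1 x]; decide)]
      rw [Finset.filter_true_of_mem (by
        rintro e he
        simp only [Finset.mem_image, Finset.mem_univ, true_and] at he
        obtain ⟨x, rfl⟩ := he; exact hp2 x)]
      rw [Finset.filter_true_of_mem (by
        rintro e he
        simp only [Finset.mem_image, Finset.mem_univ, true_and] at he
        obtain ⟨x, rfl⟩ := he; exact hp3 x)]
      rw [Finset.empty_union, Finset.empty_union,
        Finset.card_union_of_disjoint (hd_pen 2 3 (by decide) (by decide) (by decide)),
        Finset.card_image_of_injective _ (penEdge_inj n 2),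
        Finset.card_image_of_injective _ (penEdge_inj n 3)]
      simp [two_mul]
    rw [he1, he2]; simp
end

section
/- For every k ≥ 2, the graph obtained by joining two copies of the helm H_4 by a path P_k (identifying one endpoint of the path with the apex of each helm) admits a signed product cordial labeling. -/
/-- Adjacency within a copy of the helm `H₄` minus its apex: vertices `0,…,3` are the
rim 4-cycle and `4,…,7` the pendant vertices, with `a + 4` pendant to rim vertex `a`. -/
def helmRestAdj (a b : Fin 8) : Prop :=
  (a.val < 4 ∧ b.val < 4 ∧ ((a.val + 1) % 4 = b.val ∨ (b.val + 1) % 4 = a.val)) ∨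
  (b.val = a.val + 4) ∨ (a.val = b.val + 4)

instance : DecidableRel helmRestAdj := fun a b =>
  inferInstanceAs (Decidable ((a.val < 4 ∧ b.val < 4 ∧
    ((a.val + 1) % 4 = b.val ∨ (b.val + 1) % 4 = a.val)) ∨
    (b.val = a.val + 4) ∨ (a.val = b.val + 4)))

/-- The graph obtained by joining two copies of the helm `H₄` by a path `Pₖ`:
`inl i` are the path vertices `u₁,…,uₖ`, with `u₁ = inl 0` the apex of the first helm
and `uₖ = inl (k-1)` the apex of the second; `inr (inl a)` are the non-apex vertices of
the first helm and `inr (inr a)` those of the second (rim `0,…,3`, pendants `4,…,7`). -/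
def helmPath (k : ℕ) : SimpleGraph (Fin k ⊕ (Fin 8 ⊕ Fin 8)) where
  Adj x y := match x, y with
    | .inl i, .inl j => i.val + 1 = j.val ∨ j.val + 1 = i.val
    | .inl i, .inr (.inl a) => i.val = 0 ∧ a.val < 4
    | .inr (.inl a), .inl i => i.val = 0 ∧ a.val < 4
    | .inl i, .inr (.inr a) => i.val = k - 1 ∧ a.val < 4
    | .inr (.inr a), .inl i => i.val = k - 1 ∧ a.val < 4
    | .inr (.inl a), .inr (.inl b) => helmRestAdj a b
    | .inr (.inr a), .inr (.inr b) => helmRestAdj a b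
    | _, _ => False
  symm := by
    have hs : ∀ a b, helmRestAdj a b → helmRestAdj b a := by decide
    constructor
    rintro (i | a | a) (j | b | b) h
    · exact h.symm
    · exact h
    · exact h
    · exact h
    · exact hs a b h
    · exact h.elim
    · exact h
    · exact h.elim
    · exact hs a b h
  loopless := by
    have hi : ∀ a, ¬ helmRestAdj a a := by decide
    constructor
    rintro (i | a | a) h
    · omega
    · exact hi a h
    · exact hi a h

instance (k : ℕ) : DecidableRel (helmPath k).Adj := fun x y =>
  match x, y with
  | .inl i, .inl j => inferInstanceAs (Decidable (_ ∨ _))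
  | .inl i, .inr (.inl a) => inferInstanceAs (Decidable (_ ∧ _))
  | .inr (.inl a), .inl i => inferInstanceAs (Decidable (_ ∧ _))
  | .inl i, .inr (.inr a) => inferInstanceAs (Decidable (_ ∧ _))
  | .inr (.inr a), .inl i => inferInstanceAs (Decidable (_ ∧ _))
  | .inr (.inl a), .inr (.inl b) => inferInstanceAs (Decidable (helmRestAdj a b))
  | .inr (.inr a), .inr (.inr b) => inferInstanceAs (Decidable (helmRestAdj a b))
  | .inr (.inl _), .inr (.inr _) => inferInstanceAs (Decidable False)
  | .inr (.inr _), .inr (.inl _) => inferInstanceAs (Decidable False)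

/-! ### Auxiliary machinery for the proof -/

lemma sum_pm {X : Type*} [DecidableEq X] (P : Finset X) (f : X → ℤ)
    (h : ∀ x ∈ P, f x = 1 ∨ f x = -1) :
    ∑ x ∈ P, f x = ((P.filter (fun x => f x = 1)).card : ℤ)
      - ((P.filter (fun x => f x = -1)).card : ℤ) := by
  rw [← Finset.sum_filter_add_sum_filter_not P (fun x => f x = 1)]
  have h1 : ∑ x ∈ P.filter (fun x => f x = 1), f x
      = ((P.filter (fun x => f x = 1)).card : ℤ) := by
    rw [Finset.sum_congr rfl (fun x hx => (Finset.mem_filter.mp hx).2)]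
    simp
  have h2 : P.filter (fun x => ¬ f x = 1) = P.filter (fun x => f x = -1) := by
    apply Finset.filter_congr
    intro x hx
    rcases h x hx with h' | h' <;> simp [h']
  have h3 : ∑ x ∈ P.filter (fun x => f x = -1), f x
      = -((P.filter (fun x => f x = -1)).card : ℤ) := by
    rw [Finset.sum_congr rfl (fun x hx => (Finset.mem_filter.mp hx).2)]
    simp
  rw [h1, h2, h3]; ring

lemma two_mul_eCount {V : Type} [Fintype V] [DecidableEq V] (G : SimpleGraph V)
    [DecidableRel G.Adj] (α : V → ℤ) (s : ℤ) :
    2 * eCount G α s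
      = (Finset.univ.filter fun p : V × V => G.Adj p.1 p.2 ∧ α p.1 * α p.2 = s).card := by
  let Gs : SimpleGraph V :=
    { Adj := fun u v => G.Adj u v ∧ α u * α v = s
      symm := by constructor; rintro u v ⟨h1, h2⟩; exact ⟨h1.symm, by rwa [mul_comm]⟩
      loopless := by constructor; rintro u ⟨h1, _⟩; exact G.irrefl h1 }
  haveI : DecidableRel Gs.Adj := fun u v => inferInstanceAs (Decidable (_ ∧ _))
  have key : eCount G α s = Gs.edgeFinset.card := by
    unfold eCount
    congr 1
    ext e
    induction e with
    | _ u v =>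
      simp only [Finset.mem_filter, SimpleGraph.mem_edgeFinset, SimpleGraph.mem_edgeSet]
      have : edgeLabel α s(u, v) = α u * α v := rfl
      rw [this]
  rw [key, SimpleGraph.two_mul_card_edgeFinset]
  apply congrArg Finset.card
  ext ⟨u, v⟩
  simp only [Finset.mem_filter]
  exact Iff.rfl

/-- The period-4 pattern `1,1,-1,-1,…`. -/
def pfun (i : ℕ) : ℤ := if i % 4 < 2 then 1 else -1

lemma pfun_mul (i : ℕ) : pfun i * pfun (i + 1) = if i % 2 = 0 then 1 else -1 := by
  unfold pfun
  rcases (by omega : i % 4 = 0 ∨ i % 4 = 1 ∨ i % 4 = 2 ∨ i % 4 = 3) with h | h | h | h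
  · have h1 : (i+1) % 4 = 1 := by omega
    have h2 : i % 2 = 0 := by omega
    norm_num [h, h1, h2]
  · have h1 : (i+1) % 4 = 2 := by omega
    have h2 : i % 2 = 1 := by omega
    norm_num [h, h1, h2]
  · have h1 : (i+1) % 4 = 3 := by omega
    have h2 : i % 2 = 0 := by omega
    norm_num [h, h1, h2]
  · have h1 : (i+1) % 4 = 0 := by omega
    have h2 : i % 2 = 1 := by omega
    norm_num [h, h1, h2]

lemma sum_pfun (k : ℕ) : ∑ i ∈ Finset.range k, pfun i
    = if k % 4 = 0 then 0 else if k % 4 = 2 then 2 else 1 := by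
  induction k with
  | zero => simp
  | succ n ih =>
    rw [Finset.sum_range_succ, ih]
    unfold pfun
    rcases (by omega : n % 4 = 0 ∨ n % 4 = 1 ∨ n % 4 = 2 ∨ n % 4 = 3) with h | h | h | h
    · have h1 : (n+1) % 4 = 1 := by omega
      norm_num [h, h1]
    · have h1 : (n+1) % 4 = 2 := by omega
      norm_num [h, h1]
    · have h1 : (n+1) % 4 = 3 := by omega
      norm_num [h, h1]
    · have h1 : (n+1) % 4 = 0 := by omega
      norm_num [h, h1]

lemma sum_pmul (n : ℕ) : ∑ i ∈ Finset.range n, pfun i * pfun (i + 1)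
    = if n % 2 = 0 then 0 else 1 := by
  induction n with
  | zero => simp
  | succ m ih =>
    rw [Finset.sum_range_succ, ih, pfun_mul]
    rcases Nat.mod_two_eq_zero_or_one m with h | h
    · have h2 : (m+1) % 2 = 1 := by omega
      norm_num [h, h2]
    · have h2 : (m+1) % 2 = 0 := by omega
      norm_num [h, h2]

/-- The path labeling: the pattern `pfun`, except that when `k ≡ 2 (mod 4)` the last
vertex is flipped to `-1`. -/
def Bf (k i : ℕ) : ℤ := if k % 4 = 2 ∧ i = k - 1 then -1 else pfun i

lemma Bf_pm (k i : ℕ) : Bf k i = 1 ∨ Bf k i = -1 := by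
  unfold Bf pfun
  split_ifs <;> simp

/-- The labeling of a (non-apex) helm copy: rim `1,1,-1,-1`, pendants `1,-1,1,-1`. -/
def gam : Fin 8 → ℤ := ![1, 1, -1, -1, 1, -1, 1, -1]

lemma gam_pm (a : Fin 8) : gam a = 1 ∨ gam a = -1 := by fin_cases a <;> simp [gam] <;> decide

lemma sum_gam : ∑ a : Fin 8, gam a = 0 := by decide

lemma gam_block : ∑ a : Fin 8, ∑ b : Fin 8,
    (if helmRestAdj a b then gam a * gam b else 0) = 0 := by decide

lemma gam_cut : ∑ a : Fin 8, (if (a : Fin 8).val < 4 then gam a else 0) = 0 := by decide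

lemma block_apex1 (c : ℤ) (P : Prop) [Decidable P] :
    ∑ a : Fin 8, (if P ∧ a.val < 4 then c * gam a else 0) = 0 := by
  by_cases h : P
  · simp only [h, true_and]
    have he : ∀ a : Fin 8, (if a.val < 4 then c * gam a else 0)
        = c * (if a.val < 4 then gam a else 0) := by
      intro a; split_ifs <;> simp
    simp only [he, ← Finset.mul_sum]
    rw [gam_cut, mul_zero]
  · simp [h]

lemma block_apex2 (c : ℤ) (P : Prop) [Decidable P] :
    ∑ a : Fin 8, (if P ∧ a.val < 4 then gam a * c else 0) = 0 := by
  have he : ∀ a : Fin 8, (if P ∧ a.val < 4 then gam a * c else 0)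
      = (if P ∧ a.val < 4 then c * gam a else 0) := by
    intro a; split_ifs <;> [exact mul_comm _ _; rfl]
  simp only [he]
  exact block_apex1 c P

lemma sum_Bf (k : ℕ) (hk : 2 ≤ k) :
    (∑ i ∈ Finset.range k, Bf k i) = 0 ∨ (∑ i ∈ Finset.range k, Bf k i) = 1 := by
  by_cases h2 : k % 4 = 2
  · obtain ⟨m, rfl⟩ : ∃ m, k = m + 1 := ⟨k - 1, by omega⟩
    rw [Finset.sum_range_succ]
    have hm : ∑ i ∈ Finset.range m, Bf (m + 1) i = ∑ i ∈ Finset.range m, pfun i := by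
      refine Finset.sum_congr rfl fun i hi => ?_
      have : i < m := Finset.mem_range.mp hi
      unfold Bf
      rw [if_neg (by omega)]
    have hlast : Bf (m + 1) m = -1 := by
      unfold Bf
      rw [if_pos ⟨h2, by omega⟩]
    rw [hm, hlast, sum_pfun]
    have : m % 4 = 1 := by omega
    rw [if_neg (by omega), if_neg (by omega)]
    left; ring
  · have hm : ∑ i ∈ Finset.range k, Bf k i = ∑ i ∈ Finset.range k, pfun i := by
      refine Finset.sum_congr rfl fun i hi => ?_
      unfold Bf
      rw [if_neg (by tauto)]
    rw [hm, sum_pfun]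
    split_ifs with h0
    · left; rfl
    · right; rfl

lemma Tval (k : ℕ) (hk : 2 ≤ k) :
    (∑ i ∈ Finset.range (k - 1), Bf k i * Bf k (i + 1)) = -1 ∨
    (∑ i ∈ Finset.range (k - 1), Bf k i * Bf k (i + 1)) = 0 ∨
    (∑ i ∈ Finset.range (k - 1), Bf k i * Bf k (i + 1)) = 1 := by
  by_cases h2 : k % 4 = 2
  · obtain ⟨m, rfl⟩ : ∃ m, k = m + 2 := ⟨k - 2, by omega⟩
    have hk1 : m + 2 - 1 = m + 1 := by omega
    rw [hk1, Finset.sum_range_succ]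
    have hm : ∑ i ∈ Finset.range m, Bf (m + 2) i * Bf (m + 2) (i + 1)
        = ∑ i ∈ Finset.range m, pfun i * pfun (i + 1) := by
      refine Finset.sum_congr rfl fun i hi => ?_
      have : i < m := Finset.mem_range.mp hi
      unfold Bf
      rw [if_neg (by omega), if_neg (by omega)]
    have hb1 : Bf (m + 2) m = pfun m := by
      unfold Bf; rw [if_neg (by omega)]
    have hb2 : Bf (m + 2) (m + 1) = -1 := by
      unfold Bf; rw [if_pos ⟨h2, by omega⟩]
    have hpm : pfun m = 1 := by
      unfold pfun; rw [if_pos (by omega)]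
    rw [hm, hb1, hb2, hpm, sum_pmul, if_pos (by omega)]
    left; ring
  · have hm : ∑ i ∈ Finset.range (k - 1), Bf k i * Bf k (i + 1)
        = ∑ i ∈ Finset.range (k - 1), pfun i * pfun (i + 1) := by
      refine Finset.sum_congr rfl fun i hi => ?_
      unfold Bf
      rw [if_neg (by tauto), if_neg (by tauto)]
    rw [hm, sum_pmul]
    split_ifs
    · right; left; rfl
    · right; right; rfl

/-- The full labeling of the joined graph. -/
def alph (k : ℕ) : (Fin k ⊕ (Fin 8 ⊕ Fin 8)) → ℤ :=
  Sum.elim (fun i => Bf k i.val) (Sum.elim gam gam)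

lemma alph_pm (k : ℕ) (v : Fin k ⊕ (Fin 8 ⊕ Fin 8)) : alph k v = 1 ∨ alph k v = -1 := by
  rcases v with i | a | a
  · exact Bf_pm k i.val
  · exact gam_pm a
  · exact gam_pm a

section AdjLemmas

variable (k : ℕ)

lemma adj_ll (i j : Fin k) :
    (helmPath k).Adj (.inl i) (.inl j) ↔ (i.val + 1 = j.val ∨ j.val + 1 = i.val) := Iff.rfl

lemma adj_lr1 (i : Fin k) (a : Fin 8) :
    (helmPath k).Adj (.inl i) (.inr (.inl a)) ↔ (i.val = 0 ∧ a.val < 4) := Iff.rfl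

lemma adj_r1l (i : Fin k) (a : Fin 8) :
    (helmPath k).Adj (.inr (.inl a)) (.inl i) ↔ (i.val = 0 ∧ a.val < 4) := Iff.rfl

lemma adj_lr2 (i : Fin k) (a : Fin 8) :
    (helmPath k).Adj (.inl i) (.inr (.inr a)) ↔ (i.val = k - 1 ∧ a.val < 4) := Iff.rfl

lemma adj_r2l (i : Fin k) (a : Fin 8) :
    (helmPath k).Adj (.inr (.inr a)) (.inl i) ↔ (i.val = k - 1 ∧ a.val < 4) := Iff.rfl

lemma adj_r1r1 (a b : Fin 8) :
    (helmPath k).Adj (.inr (.inl a)) (.inr (.inl b)) ↔ helmRestAdj a b := Iff.rfl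

lemma adj_r2r2 (a b : Fin 8) :
    (helmPath k).Adj (.inr (.inr a)) (.inr (.inr b)) ↔ helmRestAdj a b := Iff.rfl

lemma adj_r1r2 (a b : Fin 8) :
    (helmPath k).Adj (.inr (.inl a)) (.inr (.inr b)) ↔ False := Iff.rfl

lemma adj_r2r1 (a b : Fin 8) :
    (helmPath k).Adj (.inr (.inr a)) (.inr (.inl b)) ↔ False := Iff.rfl

end AdjLemmas

lemma block_pp (k : ℕ) (hk : 2 ≤ k) :
    ∑ i : Fin k, ∑ j : Fin k,
      (if (i.val + 1 = j.val ∨ j.val + 1 = i.val) then Bf k i.val * Bf k j.val else 0)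
    = 2 * ∑ i ∈ Finset.range (k - 1), Bf k i * Bf k (i + 1) := by
  have split : ∀ i j : Fin k,
      (if (i.val + 1 = j.val ∨ j.val + 1 = i.val) then Bf k i.val * Bf k j.val else 0)
      = (if i.val + 1 = j.val then Bf k i.val * Bf k j.val else 0)
        + (if j.val + 1 = i.val then Bf k i.val * Bf k j.val else 0) := by
    intro i j
    by_cases h1 : i.val + 1 = j.val
    · by_cases h2 : j.val + 1 = i.val
      · exfalso; omega
      · simp [h1, h2]
    · by_cases h2 : j.val + 1 = i.val
      · simp [h1, h2]
      · simp [h1, h2]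
  simp only [split, Finset.sum_add_distrib]
  have hS1 : ∑ i : Fin k, ∑ j : Fin k,
      (if i.val + 1 = j.val then Bf k i.val * Bf k j.val else 0)
      = ∑ i ∈ Finset.range (k - 1), Bf k i * Bf k (i + 1) := by
    rw [Fin.sum_univ_eq_sum_range
      (fun n => ∑ j : Fin k, if n + 1 = j.val then Bf k n * Bf k j.val else 0) k]
    have inner : ∀ n : ℕ, (∑ j : Fin k, if n + 1 = j.val then Bf k n * Bf k j.val else 0)
        = if n + 1 ∈ Finset.range k then Bf k n * Bf k (n + 1) else 0 := by
      intro n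
      rw [Fin.sum_univ_eq_sum_range (fun m => if n + 1 = m then Bf k n * Bf k m else 0) k]
      exact Finset.sum_ite_eq (Finset.range k) (n + 1) (fun m => Bf k n * Bf k m)
    simp only [inner]
    rw [← Finset.sum_filter]
    have hfilt : (Finset.range k).filter (fun n => n + 1 ∈ Finset.range k)
        = Finset.range (k - 1) := by
      ext n
      simp only [Finset.mem_filter, Finset.mem_range]
      omega
    rw [hfilt]
  have hS2 : ∑ i : Fin k, ∑ j : Fin k,
      (if j.val + 1 = i.val then Bf k i.val * Bf k j.val else 0)
      = ∑ i : Fin k, ∑ j : Fin k,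
        (if i.val + 1 = j.val then Bf k i.val * Bf k j.val else 0) := by
    rw [Finset.sum_comm]
    refine Finset.sum_congr rfl fun i _ => Finset.sum_congr rfl fun j _ => ?_
    rw [mul_comm]
  rw [hS1, hS2, hS1]
  ring

/-- For every `k ≥ 2`, the graph obtained by joining two copies of the
helm `H₄` by a path `Pₖ` (identifying the endpoints of the path with the two apexes)
admits a signed product cordial labeling. -/
theorem helmPath_signedProductCordial (k : ℕ) (hk : 2 ≤ k) :
    IsSignedProductCordial (helmPath k) := by
  refine ⟨alph k, alph_pm k, ?_, ?_⟩
  · -- vertex condition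
    have hv : (vCount (alph k) 1 : ℤ) - vCount (alph k) (-1)
        = ∑ v, alph k v := by
      unfold vCount
      exact (sum_pm Finset.univ (alph k) (fun v _ => alph_pm k v)).symm
    have hsum : ∑ v, alph k v = ∑ i ∈ Finset.range k, Bf k i := by
      rw [Fintype.sum_sum_type, Fintype.sum_sum_type]
      simp only [alph, Sum.elim_inl, Sum.elim_inr]
      rw [sum_gam, Fin.sum_univ_eq_sum_range (fun n => Bf k n) k]
      ring
    rw [hv, hsum]
    rcases sum_Bf k hk with h | h <;> rw [h] <;> decide
  · -- edge condition
    have hD : ∑ p ∈ Finset.univ.filter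
          (fun p : (Fin k ⊕ (Fin 8 ⊕ Fin 8)) × (Fin k ⊕ (Fin 8 ⊕ Fin 8)) =>
            (helmPath k).Adj p.1 p.2), alph k p.1 * alph k p.2
        = 2 * ∑ i ∈ Finset.range (k - 1), Bf k i * Bf k (i + 1) := by
      rw [Finset.sum_filter, Fintype.sum_prod_type]
      simp only [Fintype.sum_sum_type, alph, Sum.elim_inl, Sum.elim_inr,
        adj_ll, adj_lr1, adj_r1l, adj_lr2, adj_r2l, adj_r1r1, adj_r2r2,
        adj_r1r2, adj_r2r1, if_false, Finset.sum_const_zero]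
      simp only [add_zero, zero_add, Finset.sum_add_distrib]
      have h1 := block_pp k hk
      have h2 : ∑ x : Fin k, ∑ a : Fin 8,
          (if x.val = 0 ∧ a.val < 4 then Bf k x.val * gam a else 0) = 0 :=
        Finset.sum_eq_zero fun i _ => block_apex1 (Bf k i.val) (i.val = 0)
      have h3 : ∑ x : Fin k, ∑ a : Fin 8,
          (if x.val = k - 1 ∧ a.val < 4 then Bf k x.val * gam a else 0) = 0 :=
        Finset.sum_eq_zero fun i _ => block_apex1 (Bf k i.val) (i.val = k - 1)
      have h4 : ∑ a : Fin 8, ∑ x : Fin k,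
          (if x.val = 0 ∧ a.val < 4 then gam a * Bf k x.val else 0) = 0 := by
        rw [Finset.sum_comm]
        exact Finset.sum_eq_zero fun i _ => block_apex2 (Bf k i.val) (i.val = 0)
      have h5 : ∑ a : Fin 8, ∑ x : Fin k,
          (if x.val = k - 1 ∧ a.val < 4 then gam a * Bf k x.val else 0) = 0 := by
        rw [Finset.sum_comm]
        exact Finset.sum_eq_zero fun i _ => block_apex2 (Bf k i.val) (i.val = k - 1)
      rw [h1, h2, h3, h4, h5, gam_block]
      ring
    have hcount : ∑ p ∈ Finset.univ.filter
          (fun p : (Fin k ⊕ (Fin 8 ⊕ Fin 8)) × (Fin k ⊕ (Fin 8 ⊕ Fin 8)) =>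
            (helmPath k).Adj p.1 p.2), alph k p.1 * alph k p.2
        = (2 * eCount (helmPath k) (alph k) 1 : ℤ)
          - (2 * eCount (helmPath k) (alph k) (-1) : ℤ) := by
      rw [sum_pm _ _ (fun p _ => by
        rcases alph_pm k p.1 with h | h <;> rcases alph_pm k p.2 with h' | h' <;>
          simp [h, h'])]
      rw [Finset.filter_filter, Finset.filter_filter]
      rw [← two_mul_eCount, ← two_mul_eCount]
      push_cast
      ring
    have hfin : 2 * ((eCount (helmPath k) (alph k) 1 : ℤ)
        - (eCount (helmPath k) (alph k) (-1) : ℤ))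
        = 2 * ∑ i ∈ Finset.range (k - 1), Bf k i * Bf k (i + 1) := by
      rw [← hD, hcount]; ring
    rcases Tval k hk with h | h | h <;> rw [h] at hfin <;> omega
end
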